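/- For open sets J, K ⊆ ℝ and settling names ρ, σ, τ: if J ⊩₃ ρ = σ and K ⊩₃ ρ ∈ τ, then (J ∩ K) ⊩₃ σ ∈ τ. -/

import Mathlib

/-- Settling names over ℝ: a family of pairs of a settling name and an open set of
reals, together with a family of pairs of a settling name and a real. -/
inductive SName : Type 1
  | mk (ι : Type) (elem : ι → SName) (cond : ι → Set ℝ) (hopen : ∀ i, IsOpen (cond i))
       (κ : Type) (relem : κ → SName) (rcond : κ → ℝ) : SName

namespace Ordinal

/-- Natural addition of ordinals (the Hessenberg sum), as in the older Mathlib. -/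
noncomputable def nadd : Ordinal.{0} → Ordinal.{0} → Ordinal.{0}
  | a, b =>
    max (blsub.{0, 0} a fun a' _ => nadd a' b) (blsub.{0, 0} b fun b' _ => nadd a b')
termination_by a b => (a, b)

theorem nadd_def (a b : Ordinal.{0}) :
    nadd a b = max (blsub.{0, 0} a fun a' _ => nadd a' b) (blsub.{0, 0} b fun b' _ => nadd a b') := by
  rw [nadd]

theorem nadd_comm (a b : Ordinal.{0}) : nadd a b = nadd b a := by
  rw [nadd_def, nadd_def, max_comm]
  congr <;> ext x hx <;> apply nadd_comm
termination_by (a, b)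

theorem nadd_lt_nadd_left {b c : Ordinal.{0}} (h : b < c) (a : Ordinal.{0}) :
    nadd a b < nadd a c := by
  rw [nadd_def a c]
  exact lt_max_of_lt_right (lt_blsub (fun b' _ => nadd a b') b h)

theorem nadd_lt_nadd_right {b c : Ordinal.{0}} (h : b < c) (a : Ordinal.{0}) :
    nadd b a < nadd c a := by
  rw [nadd_def c a]
  exact lt_max_of_lt_left (lt_blsub (fun b' _ => nadd b' a) b h)

end Ordinal

namespace NaturalOps

scoped infixl:65 " ♯ " => Ordinal.nadd

end NaturalOps

namespace SName

/-- Index type of the open-set pairs. -/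
def idx : SName → Type
  | mk ι _ _ _ _ _ _ => ι

/-- Name component of an open-set pair. -/
def elem : (σ : SName) → σ.idx → SName
  | mk _ e _ _ _ _ _ => e

/-- Open-set component of an open-set pair. -/
def cond : (σ : SName) → σ.idx → Set ℝ
  | mk _ _ c _ _ _ _ => c

theorem cond_isOpen : ∀ (σ : SName) (i : σ.idx), IsOpen (σ.cond i)
  | mk _ _ _ h _ _ _ => h

/-- Index type of the real pairs. -/
def ridx : SName → Type
  | mk _ _ _ _ κ _ _ => κ

/-- Name component of a real pair. -/
def relem : (σ : SName) → σ.ridx → SName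
  | mk _ _ _ _ _ re _ => re

/-- Real component of a real pair. -/
def rcond : (σ : SName) → σ.ridx → ℝ
  | mk _ _ _ _ _ _ rc => rc

/-- Hereditary extensional equality of settling names. -/
def equiv : SName → SName → Prop
  | mk _ e c _ _ re rc, mk _ e' c' _ _ re' rc' =>
    ((∀ i, ∃ i', equiv (e i) (e' i') ∧ c i = c' i') ∧
     (∀ i', ∃ i, equiv (e i) (e' i') ∧ c i = c' i')) ∧
    ((∀ h, ∃ h', equiv (re h) (re' h') ∧ rc h = rc' h') ∧
     (∀ h', ∃ h, equiv (re h) (re' h') ∧ rc h = rc' h'))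

/-- The settling σ^r of a settling name σ at a real r. -/
def settle : SName → ℝ → SName
  | mk ι e c _ κ re rc, r =>
    mk ({i : ι // r ∈ c i} ⊕ {h : κ // rc h = r})
      (Sum.elim (fun i => settle (e i.1) r) (fun h => settle (re h.1) r))
      (fun _ => Set.univ) (fun _ => isOpen_univ)
      Empty (fun h => h.elim) (fun h => h.elim)

/-- Rank of a settling name (over the open-set pairs), used for the recursive
definition of settling forcing. -/
noncomputable def rank : SName → Ordinal.{0}
  | mk _ e _ _ _ _ _ => Ordinal.lsub fun i => rank (e i)

theorem rank_elem_lt : ∀ (σ : SName) (i : σ.idx), (σ.elem i).rank < σ.rank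
  | mk ι e c h κ re rc, i => by
    simpa [rank, elem] using Ordinal.lt_lsub (fun i => rank (e i)) i

open NaturalOps

mutual
  /-- `seq σ τ J` means `J ⊩₃ σ = τ`. -/
  def seq (σ τ : SName) (J : Set ℝ) : Prop :=
    (∀ i : σ.idx, smem (σ.elem i) τ (J ∩ σ.cond i)) ∧
    (∀ j : τ.idx, smem (τ.elem j) σ (J ∩ τ.cond j)) ∧
    (∀ r ∈ J, equiv (σ.settle r) (τ.settle r))
  termination_by σ.rank ♯ τ.rank
  decreasing_by
    · exact Ordinal.nadd_lt_nadd_right (rank_elem_lt σ i) τ.rank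
    · rw [Ordinal.nadd_comm]
      exact Ordinal.nadd_lt_nadd_left (rank_elem_lt τ j) σ.rank

  /-- `smem σ τ J` means `J ⊩₃ σ ∈ τ`. -/
  def smem (σ τ : SName) (J : Set ℝ) : Prop :=
    (∀ r ∈ J, ∃ (j : τ.idx) (J' : Set ℝ), IsOpen J' ∧ J' ⊆ J ∧ r ∈ J' ∩ τ.cond j ∧
      seq σ (τ.elem j) (J' ∩ τ.cond j)) ∧
    (∀ r ∈ J, ∃ k : (τ.settle r).idx,
      (τ.settle r).cond k = Set.univ ∧ equiv ((τ.settle r).elem k) (σ.settle r))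
  termination_by σ.rank ♯ τ.rank
  decreasing_by
    exact Ordinal.nadd_lt_nadd_left (rank_elem_lt τ j) σ.rank
end

end SName

namespace Ordinal

theorem nadd_le_iff' {a b c : Ordinal.{0}} :
    nadd a b ≤ c ↔ (∀ a' < a, nadd a' b < c) ∧ (∀ b' < b, nadd a b' < c) := by
  rw [nadd_def, max_le_iff, blsub_le_iff, blsub_le_iff]

theorem lt_nadd_iff' {a b c : Ordinal.{0}} :
    c < nadd a b ↔ (∃ a' < a, c ≤ nadd a' b) ∨ (∃ b' < b, c ≤ nadd a b') := by
  rw [nadd_def, lt_max_iff, lt_blsub_iff, lt_blsub_iff]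
  simp only [exists_prop]

theorem nadd_le_nadd_left' {b c : Ordinal.{0}} (h : b ≤ c) (a : Ordinal.{0}) :
    nadd a b ≤ nadd a c := by
  rcases h.lt_or_eq with h | rfl
  · exact (nadd_lt_nadd_left h a).le
  · exact le_rfl

theorem nadd_le_nadd_right' {b c : Ordinal.{0}} (h : b ≤ c) (a : Ordinal.{0}) :
    nadd b a ≤ nadd c a := by
  rcases h.lt_or_eq with h | rfl
  · exact (nadd_lt_nadd_right h a).le
  · exact le_rfl

theorem nadd_assoc (a b c : Ordinal.{0}) : nadd (nadd a b) c = nadd a (nadd b c) := by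
  apply le_antisymm
  · rw [nadd_le_iff']
    constructor
    · intro d hd
      rcases lt_nadd_iff'.1 hd with ⟨a', ha, hd⟩ | ⟨b', hb, hd⟩
      · calc nadd d c ≤ nadd (nadd a' b) c := nadd_le_nadd_right' hd c
          _ = nadd a' (nadd b c) := nadd_assoc a' b c
          _ < nadd a (nadd b c) := nadd_lt_nadd_right ha _
      · calc nadd d c ≤ nadd (nadd a b') c := nadd_le_nadd_right' hd c
          _ = nadd a (nadd b' c) := nadd_assoc a b' c
          _ < nadd a (nadd b c) := nadd_lt_nadd_left (nadd_lt_nadd_right hb c) a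
    · intro c' hc
      calc nadd (nadd a b) c' = nadd a (nadd b c') := nadd_assoc a b c'
        _ < _ := nadd_lt_nadd_left (nadd_lt_nadd_left hc b) a
  · rw [nadd_le_iff']
    constructor
    · intro a' ha
      calc nadd a' (nadd b c) = nadd (nadd a' b) c := (nadd_assoc a' b c).symm
        _ < _ := nadd_lt_nadd_right (nadd_lt_nadd_right ha b) c
    · intro d hd
      rcases lt_nadd_iff'.1 hd with ⟨b', hb, hd⟩ | ⟨c', hc, hd⟩
      · calc nadd a d ≤ nadd a (nadd b' c) := nadd_le_nadd_left' hd a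
          _ = nadd (nadd a b') c := (nadd_assoc a b' c).symm
          _ < _ := nadd_lt_nadd_right (nadd_lt_nadd_left hb a) c
      · calc nadd a d ≤ nadd a (nadd b c') := nadd_le_nadd_left' hd a
          _ = nadd (nadd a b) c' := (nadd_assoc a b c').symm
          _ < _ := nadd_lt_nadd_left hc _
termination_by (a, b, c)

end Ordinal

namespace SName

open Ordinal in
/-- Full hereditary rank, over both kinds of pairs. -/
noncomputable def hrank : SName → Ordinal.{0}
  | mk ι e _ _ κ re _ =>
    Ordinal.lsub (fun x : ι ⊕ κ => Sum.elim (fun i => hrank (e i)) (fun h => hrank (re h)) x)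

theorem hrank_elem_lt : ∀ (σ : SName) (i : σ.idx), (σ.elem i).hrank < σ.hrank
  | mk ι e c h κ re rc, i => by
    rw [hrank]
    exact
      Ordinal.lt_lsub (fun x : ι ⊕ κ =>
        Sum.elim (fun i => hrank (e i)) (fun h => hrank (re h)) x) (Sum.inl i)

theorem hrank_relem_lt : ∀ (σ : SName) (h : σ.ridx), (σ.relem h).hrank < σ.hrank
  | mk ι e c hc κ re rc, h => by
    rw [hrank]
    exact
      Ordinal.lt_lsub (fun x : ι ⊕ κ =>
        Sum.elim (fun i => hrank (e i)) (fun h => hrank (re h)) x) (Sum.inr h)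

theorem equiv_iff : ∀ σ τ : SName, equiv σ τ ↔
    (((∀ i : σ.idx, ∃ i' : τ.idx, equiv (σ.elem i) (τ.elem i') ∧ σ.cond i = τ.cond i') ∧
      (∀ i' : τ.idx, ∃ i : σ.idx, equiv (σ.elem i) (τ.elem i') ∧ σ.cond i = τ.cond i')) ∧
     ((∀ h : σ.ridx, ∃ h' : τ.ridx, equiv (σ.relem h) (τ.relem h') ∧ σ.rcond h = τ.rcond h') ∧
      (∀ h' : τ.ridx, ∃ h : σ.ridx, equiv (σ.relem h) (τ.relem h') ∧ σ.rcond h = τ.rcond h')))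
  | mk _ _ _ _ _ _ _, mk _ _ _ _ _ _ _ => Iff.rfl

theorem equiv_symm : ∀ σ τ : SName, equiv σ τ → equiv τ σ := by
  intro σ τ h
  rw [equiv_iff] at h ⊢
  obtain ⟨⟨h1, h2⟩, h3, h4⟩ := h
  refine ⟨⟨?_, ?_⟩, ?_, ?_⟩
  · intro i'; obtain ⟨i, hi, hc⟩ := h2 i'; exact ⟨i, equiv_symm _ _ hi, hc.symm⟩
  · intro i; obtain ⟨i', hi, hc⟩ := h1 i; exact ⟨i', equiv_symm _ _ hi, hc.symm⟩
  · intro k'; obtain ⟨k, hk, hc⟩ := h4 k'; exact ⟨k, equiv_symm _ _ hk, hc.symm⟩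
  · intro k; obtain ⟨k', hk, hc⟩ := h3 k; exact ⟨k', equiv_symm _ _ hk, hc.symm⟩
termination_by σ => σ.hrank
decreasing_by
  · exact hrank_elem_lt σ i
  · exact hrank_elem_lt σ i
  · exact hrank_relem_lt σ k
  · exact hrank_relem_lt σ k

theorem equiv_trans : ∀ σ τ υ : SName, equiv σ τ → equiv τ υ → equiv σ υ := by
  intro σ τ υ h h'
  rw [equiv_iff] at h h' ⊢
  obtain ⟨⟨h1, h2⟩, h3, h4⟩ := h
  obtain ⟨⟨g1, g2⟩, g3, g4⟩ := h'
  refine ⟨⟨?_, ?_⟩, ?_, ?_⟩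
  · intro i
    obtain ⟨j, hj, hc⟩ := h1 i; obtain ⟨k, hk, hc'⟩ := g1 j
    exact ⟨k, equiv_trans _ _ _ hj hk, hc.trans hc'⟩
  · intro k
    obtain ⟨j, hj, hc'⟩ := g2 k; obtain ⟨i, hi, hc⟩ := h2 j
    exact ⟨i, equiv_trans _ _ _ hi hj, hc.trans hc'⟩
  · intro i
    obtain ⟨j, hj, hc⟩ := h3 i; obtain ⟨k, hk, hc'⟩ := g3 j
    exact ⟨k, equiv_trans _ _ _ hj hk, hc.trans hc'⟩
  · intro k
    obtain ⟨j, hj, hc'⟩ := g4 k; obtain ⟨i, hi, hc⟩ := h4 j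
    exact ⟨i, equiv_trans _ _ _ hi hj, hc.trans hc'⟩
termination_by σ _ _ => σ.hrank
decreasing_by
  · exact hrank_elem_lt σ i
  · exact hrank_elem_lt σ i
  · exact hrank_relem_lt σ i
  · exact hrank_relem_lt σ i

theorem seq_def (σ τ : SName) (J : Set ℝ) : seq σ τ J ↔
    ((∀ i : σ.idx, smem (σ.elem i) τ (J ∩ σ.cond i)) ∧
     (∀ j : τ.idx, smem (τ.elem j) σ (J ∩ τ.cond j)) ∧
     (∀ r ∈ J, equiv (σ.settle r) (τ.settle r))) := by
  rw [seq]

theorem smem_def (σ τ : SName) (J : Set ℝ) : smem σ τ J ↔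
    ((∀ r ∈ J, ∃ (j : τ.idx) (J' : Set ℝ), IsOpen J' ∧ J' ⊆ J ∧ r ∈ J' ∩ τ.cond j ∧
       seq σ (τ.elem j) (J' ∩ τ.cond j)) ∧
     (∀ r ∈ J, ∃ k : (τ.settle r).idx,
       (τ.settle r).cond k = Set.univ ∧ equiv ((τ.settle r).elem k) (σ.settle r))) := by
  rw [smem]

end SName
namespace SName

open NaturalOps

mutual
  theorem seq_mono (σ τ : SName) (J J' : Set ℝ) (hJ' : IsOpen J') (hs : J' ⊆ J)
      (h : seq σ τ J) : seq σ τ J' := by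
    rw [seq_def] at h ⊢
    exact ⟨fun i => smem_mono (σ.elem i) τ (J ∩ σ.cond i) (J' ∩ σ.cond i)
        (hJ'.inter (σ.cond_isOpen i)) (Set.inter_subset_inter_left _ hs) (h.1 i),
      fun j => smem_mono (τ.elem j) σ (J ∩ τ.cond j) (J' ∩ τ.cond j)
        (hJ'.inter (τ.cond_isOpen j)) (Set.inter_subset_inter_left _ hs) (h.2.1 j),
      fun r hr => h.2.2 r (hs hr)⟩
  termination_by σ.rank ♯ τ.rank
  decreasing_by
    · exact Ordinal.nadd_lt_nadd_right (rank_elem_lt σ i) τ.rank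
    · rw [Ordinal.nadd_comm]
      exact Ordinal.nadd_lt_nadd_left (rank_elem_lt τ j) σ.rank

  theorem smem_mono (σ τ : SName) (J J' : Set ℝ) (hJ' : IsOpen J') (hs : J' ⊆ J)
      (h : smem σ τ J) : smem σ τ J' := by
    rw [smem_def] at h ⊢
    refine ⟨?_, fun r hr => h.2 r (hs hr)⟩
    intro r hr
    obtain ⟨j, J'', hJ''o, hJ''sub, ⟨hrJ'', hrc⟩, hsq⟩ := h.1 r (hs hr)
    refine ⟨j, J'' ∩ J', hJ''o.inter hJ', Set.inter_subset_right, ⟨⟨hrJ'', hr⟩, hrc⟩, ?_⟩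
    exact seq_mono σ (τ.elem j) (J'' ∩ τ.cond j) _
      ((hJ''o.inter hJ').inter (τ.cond_isOpen j))
      (Set.inter_subset_inter_left _ Set.inter_subset_left) hsq
  termination_by σ.rank ♯ τ.rank
  decreasing_by
    exact Ordinal.nadd_lt_nadd_left (rank_elem_lt τ j) σ.rank
end

theorem seq_symm (σ τ : SName) (J : Set ℝ) (h : seq σ τ J) : seq τ σ J := by
  rw [seq_def] at h ⊢
  exact ⟨h.2.1, h.1, fun r hr => equiv_symm _ _ (h.2.2 r hr)⟩

mutual
  theorem seq_trans (ρ σ τ : SName) (J : Set ℝ) (hJ : IsOpen J)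
      (h1 : seq ρ σ J) (h2 : seq σ τ J) : seq ρ τ J := by
    have h1' := (seq_def ρ σ J).mp h1
    have h2' := (seq_def σ τ J).mp h2
    rw [seq_def]
    refine ⟨?_, ?_, fun r hr => equiv_trans _ _ _ (h1'.2.2 r hr) (h2'.2.2 r hr)⟩
    · intro i
      exact smem_congr_right (ρ.elem i) σ τ (J ∩ ρ.cond i) (hJ.inter (ρ.cond_isOpen i))
        (h1'.1 i)
        (seq_mono σ τ J _ (hJ.inter (ρ.cond_isOpen i)) Set.inter_subset_left h2)
    · intro j
      exact smem_congr_right (τ.elem j) σ ρ (J ∩ τ.cond j) (hJ.inter (τ.cond_isOpen j))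
        (h2'.2.1 j)
        (seq_mono σ ρ J _ (hJ.inter (τ.cond_isOpen j)) Set.inter_subset_left
          (seq_symm ρ σ J h1))
  termination_by ρ.rank ♯ σ.rank ♯ τ.rank
  decreasing_by
    · exact Ordinal.nadd_lt_nadd_right (Ordinal.nadd_lt_nadd_right (rank_elem_lt ρ i) _) _
    · calc ((τ.elem j).rank ♯ σ.rank) ♯ ρ.rank
          < (τ.rank ♯ σ.rank) ♯ ρ.rank :=
            Ordinal.nadd_lt_nadd_right (Ordinal.nadd_lt_nadd_right (rank_elem_lt τ j) _) _
        _ = ρ.rank ♯ (τ.rank ♯ σ.rank) := Ordinal.nadd_comm _ _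
        _ = ρ.rank ♯ (σ.rank ♯ τ.rank) := by rw [Ordinal.nadd_comm τ.rank σ.rank]
        _ = (ρ.rank ♯ σ.rank) ♯ τ.rank := (Ordinal.nadd_assoc _ _ _).symm

  theorem smem_congr_right (σ τ τ' : SName) (J : Set ℝ) (hJ : IsOpen J)
      (h : smem σ τ J) (e : seq τ τ' J) : smem σ τ' J := by
    have h' := (smem_def σ τ J).mp h
    have e' := (seq_def τ τ' J).mp e
    rw [smem_def]
    constructor
    · intro r hr
      obtain ⟨j, J', hJ'o, hJ'sub, ⟨hrJ', hrc⟩, hsq⟩ := h'.1 r hr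
      have hm := ((smem_def (τ.elem j) τ' (J ∩ τ.cond j)).mp (e'.1 j)).1 r ⟨hJ'sub hrJ', hrc⟩
      obtain ⟨j', J'', hJ''o, hJ''sub, ⟨hrJ'', hrc'⟩, hsq'⟩ := hm
      have hopen : IsOpen ((J' ∩ J'') ∩ τ'.cond j') :=
        (hJ'o.inter hJ''o).inter (τ'.cond_isOpen j')
      refine ⟨j', J' ∩ J'', hJ'o.inter hJ''o, Set.inter_subset_left.trans hJ'sub,
        ⟨⟨hrJ', hrJ''⟩, hrc'⟩, ?_⟩
      have s1 : seq σ (τ.elem j) ((J' ∩ J'') ∩ τ'.cond j') :=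
        seq_mono σ (τ.elem j) (J' ∩ τ.cond j) _ hopen
          (fun x hx => ⟨hx.1.1, (hJ''sub hx.1.2).2⟩) hsq
      have s2 : seq (τ.elem j) (τ'.elem j') ((J' ∩ J'') ∩ τ'.cond j') :=
        seq_mono (τ.elem j) (τ'.elem j') (J'' ∩ τ'.cond j') _ hopen
          (Set.inter_subset_inter_left _ Set.inter_subset_right) hsq'
      exact seq_trans σ (τ.elem j) (τ'.elem j') _ hopen s1 s2
    · intro r hr
      obtain ⟨k, hku, hke⟩ := h'.2 r hr
      obtain ⟨k', hkk', hcc⟩ := ((equiv_iff _ _).mp (e'.2.2 r hr)).1.1 k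
      exact ⟨k', hcc.symm.trans hku, equiv_trans _ _ _ (equiv_symm _ _ hkk') hke⟩
  termination_by σ.rank ♯ τ.rank ♯ τ'.rank
  decreasing_by
    exact ((Ordinal.nadd_lt_nadd_right (Ordinal.nadd_lt_nadd_left (rank_elem_lt τ j) _) _).trans
      (Ordinal.nadd_lt_nadd_left (rank_elem_lt τ' j') _))
end

end SName
theorem sforces_mem_congr_left (J K : Set ℝ) (hJ : IsOpen J) (hK : IsOpen K) (ρ σ τ : SName)
    (h₁ : SName.seq ρ σ J) (h₂ : SName.smem ρ τ K) : SName.smem σ τ (J ∩ K) := by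
  open SName in
  have h₂' := (smem_def ρ τ K).mp h₂
  refine (smem_def σ τ (J ∩ K)).mpr ⟨?_, ?_⟩
  · rintro r ⟨hrJ, hrK⟩
    obtain ⟨j, J', hJ'o, hJ'sub, ⟨hrJ', hrc⟩, hsq⟩ := h₂'.1 r hrK
    have hopen : IsOpen ((J ∩ J') ∩ τ.cond j) := (hJ.inter hJ'o).inter (τ.cond_isOpen j)
    refine ⟨j, J ∩ J', hJ.inter hJ'o, Set.inter_subset_inter_right J hJ'sub,
      ⟨⟨hrJ, hrJ'⟩, hrc⟩, ?_⟩
    have s1 : seq ρ σ ((J ∩ J') ∩ τ.cond j) :=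
      seq_mono ρ σ J _ hopen (fun x hx => hx.1.1) h₁
    have s2 : seq ρ (τ.elem j) ((J ∩ J') ∩ τ.cond j) :=
      seq_mono ρ (τ.elem j) (J' ∩ τ.cond j) _ hopen
        (Set.inter_subset_inter_left _ Set.inter_subset_right) hsq
    exact seq_trans σ ρ (τ.elem j) _ hopen (seq_symm ρ σ _ s1) s2
  · rintro r ⟨hrJ, hrK⟩
    obtain ⟨k, hku, hke⟩ := h₂'.2 r hrK
    exact ⟨k, hku, equiv_trans _ _ _ hke (((seq_def ρ σ J).mp h₁).2.2 r hrJ)⟩
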